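/- Assume (φ1)–(φ3), let V(t) = Φ(|t² − α²|), and let q be a heteroclinic solution of problem (P). If m − 1 < 1, then α·tanh(αt) ≤ q(t) ≤ α·tanh(αt/(l−1)) for all t ≥ 0. -/

import Mathlib

open Real Filter Set MeasureTheory

noncomputable def Phi (φ : ℝ → ℝ) (t : ℝ) : ℝ := ∫ s in (0:ℝ)..|t|, s * φ s

section PhiLemmas

variable {φ : ℝ → ℝ} {c₂ δ₀ r : ℝ}

structure PhiHyp (φ : ℝ → ℝ) (c₂ δ₀ r : ℝ) : Prop where
  cont : ContinuousOn φ (Set.Ioi 0)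
  pos : ∀ t > 0, 0 < φ t
  hc₂ : 0 < c₂
  hδ₀ : 0 < δ₀
  hr : 1 < r
  bound : ∀ t : ℝ, 0 < t → t ≤ δ₀ → φ t * t ≤ c₂ * t ^ (r - 1)

lemma psi_contOn (H : PhiHyp φ c₂ δ₀ r) : ContinuousOn (fun s => s * φ s) (Set.Ioi 0) :=
  (continuousOn_id).mul H.cont

lemma psi_bound (H : PhiHyp φ c₂ δ₀ r) {s : ℝ} (h0 : 0 < s) (h1 : s ≤ δ₀) :
    ‖s * φ s‖ ≤ c₂ * δ₀ ^ (r - 1) := by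
  have h2 : 0 < φ s := H.pos s h0
  have h3 : φ s * s ≤ c₂ * s ^ (r - 1) := H.bound s h0 h1
  have h4 : s ^ (r - 1) ≤ δ₀ ^ (r - 1) :=
    Real.rpow_le_rpow h0.le h1 (by linarith [H.hr])
  have h5 : 0 < s * φ s := mul_pos h0 h2
  rw [Real.norm_eq_abs, abs_of_pos h5]
  calc s * φ s = φ s * s := mul_comm _ _
    _ ≤ c₂ * s ^ (r - 1) := h3
    _ ≤ c₂ * δ₀ ^ (r - 1) := mul_le_mul_of_nonneg_left h4 H.hc₂.le

lemma psi_intble (H : PhiHyp φ c₂ δ₀ r) {x : ℝ} (hx : 0 ≤ x) :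
    IntervalIntegrable (fun s => s * φ s) volume 0 x := by
  rcases eq_or_lt_of_le hx with h | h
  · simp [← h]
  set a := min δ₀ x with ha
  have ha0 : 0 < a := lt_min H.hδ₀ h
  have hax : a ≤ x := min_le_right _ _
  have i1 : IntegrableOn (fun s => s * φ s) (Ioc 0 a) volume := by
    refine ⟨(((psi_contOn H).mono (fun s hs => hs.1)).aemeasurable
        measurableSet_Ioc).aestronglyMeasurable,
      HasFiniteIntegral.restrict_of_bounded (C := c₂ * δ₀ ^ (r - 1)) measure_Ioc_lt_top ?_⟩
    filter_upwards [MeasureTheory.ae_restrict_mem measurableSet_Ioc] with s hs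
    exact psi_bound H hs.1 (hs.2.trans (min_le_left _ _))
  have i2 : IntegrableOn (fun s => s * φ s) (Icc a x) volume := by
    apply ContinuousOn.integrableOn_Icc
    exact (psi_contOn H).mono (fun s hs => lt_of_lt_of_le ha0 hs.1)
  have i3 : IntegrableOn (fun s => s * φ s) (Ioc 0 x) volume := by
    have hsub : Ioc 0 x ⊆ Ioc 0 a ∪ Icc a x := by
      intro s hs
      rcases le_or_gt s a with h' | h'
      · exact Or.inl ⟨hs.1, h'⟩
      · exact Or.inr ⟨h'.le, hs.2⟩
    exact (i1.union i2).mono_set hsub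
  rw [intervalIntegrable_iff_integrableOn_Ioc_of_le hx]
  exact i3

end PhiLemmas
section PhiLemmas2

variable {φ : ℝ → ℝ} {c₂ δ₀ r : ℝ}

lemma Phi_abs (x : ℝ) : Phi φ |x| = Phi φ x := by
  unfold Phi; rw [abs_abs]

lemma Phi_zero : Phi φ 0 = 0 := by
  unfold Phi; simp

lemma Phi_eq {x : ℝ} (hx : 0 ≤ x) : Phi φ x = ∫ s in (0:ℝ)..x, s * φ s := by
  unfold Phi; rw [abs_of_nonneg hx]

lemma Phi_strict (H : PhiHyp φ c₂ δ₀ r) {a b : ℝ} (ha : 0 ≤ a) (hab : a < b) :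
    Phi φ a < Phi φ b := by
  have hb : 0 ≤ b := ha.trans hab.le
  have ia := psi_intble H ha
  have ib := psi_intble H hb
  have iab : IntervalIntegrable (fun s => s * φ s) volume a b :=
    ib.mono_set (by rw [uIcc_of_le hab.le, uIcc_of_le hb]; exact Icc_subset_Icc ha le_rfl)
  rw [Phi_eq ha, Phi_eq hb, ← intervalIntegral.integral_add_adjacent_intervals ia iab]
  have hpos : 0 < ∫ s in a..b, s * φ s := by
    apply intervalIntegral.intervalIntegral_pos_of_pos_on iab _ hab
    intro s hs
    have h0 : 0 < s := lt_of_le_of_lt ha hs.1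
    exact mul_pos h0 (H.pos s h0)
  linarith

lemma Phi_mono (H : PhiHyp φ c₂ δ₀ r) {a b : ℝ} (ha : 0 ≤ a) (hab : a ≤ b) :
    Phi φ a ≤ Phi φ b := by
  rcases eq_or_lt_of_le hab with h | h
  · rw [h]
  · exact (Phi_strict H ha h).le

lemma Phi_nonneg (H : PhiHyp φ c₂ δ₀ r) (x : ℝ) : 0 ≤ Phi φ x := by
  rw [← Phi_abs]
  rw [← Phi_zero (φ := φ)]
  exact Phi_mono H le_rfl (abs_nonneg x)

lemma Phi_pos (H : PhiHyp φ c₂ δ₀ r) {x : ℝ} (hx : x ≠ 0) : 0 < Phi φ x := by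
  rw [← Phi_abs, ← Phi_zero (φ := φ)]
  exact Phi_strict H le_rfl (abs_pos.2 hx)

/-- reflects ≤ -/
lemma Phi_le_rev (H : PhiHyp φ c₂ δ₀ r) {a b : ℝ} (ha : 0 ≤ a) (hb : 0 ≤ b)
    (h : Phi φ a ≤ Phi φ b) : a ≤ b := by
  by_contra hc
  push_neg at hc
  exact absurd h (not_le.2 (Phi_strict H hb hc))

lemma Phi_rpow_bound (H : PhiHyp φ c₂ δ₀ r) {x : ℝ} (h0 : 0 ≤ x) (h1 : x ≤ δ₀) :
    Phi φ x ≤ c₂ * x ^ r / r := by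
  have hr0 : (0:ℝ) < r := by linarith [H.hr]
  have key : Phi φ x ≤ ∫ s in (0:ℝ)..x, c₂ * s ^ (r - 1) := by
    rw [Phi_eq h0]
    apply intervalIntegral.integral_mono_on h0 (psi_intble H h0)
    · apply IntervalIntegrable.const_mul
      apply intervalIntegral.intervalIntegrable_rpow'
      linarith [H.hr]
    · intro s hs
      rcases eq_or_lt_of_le hs.1 with h | h
      · simp [← h]
        rw [Real.zero_rpow (by linarith [H.hr] : r - 1 ≠ 0)]
        simp
      · calc s * φ s = φ s * s := mul_comm _ _
          _ ≤ c₂ * s ^ (r - 1) := H.bound s h (hs.2.trans h1)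
  calc Phi φ x ≤ ∫ s in (0:ℝ)..x, c₂ * s ^ (r - 1) := key
    _ = c₂ * (x ^ r / r) := by
        rw [intervalIntegral.integral_const_mul, integral_rpow (Or.inl (by linarith [H.hr] : (-1:ℝ) < r - 1))]
        rw [sub_add_cancel]
        rw [Real.zero_rpow (by positivity : r ≠ 0)]
        ring
    _ = c₂ * x ^ r / r := by ring

end PhiLemmas2
section PhiDeriv

variable {φ : ℝ → ℝ} {c₂ δ₀ r : ℝ}

noncomputable def Phid (φ : ℝ → ℝ) (x : ℝ) : ℝ := if x = 0 then 0 else x * φ |x|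

lemma Phi_hasDerivAt (H : PhiHyp φ c₂ δ₀ r) (x : ℝ) :
    HasDerivAt (Phi φ) (Phid φ x) x := by
  have hG : ∀ y > (0:ℝ), HasDerivAt (fun u => ∫ s in (0:ℝ)..u, s * φ s) (y * φ y) y := by
    intro y hy
    apply intervalIntegral.integral_hasDerivAt_right (psi_intble H hy.le)
    · exact ⟨Ioi 0, Ioi_mem_nhds hy, (((psi_contOn H).mono le_rfl).aemeasurable
        measurableSet_Ioi).aestronglyMeasurable⟩
    · exact (psi_contOn H).continuousAt (Ioi_mem_nhds hy)
  rcases lt_trichotomy x 0 with hx | hx | hx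
  · -- x < 0
    have h1 : HasDerivAt (fun y : ℝ => ∫ s in (0:ℝ)..(-y), s * φ s) (x * φ (-x)) x := by
      have := (hG (-x) (by linarith)).comp x (hasDerivAt_neg x)
      refine this.congr_deriv ?_
      ring
    have h2 : Phi φ =ᶠ[nhds x] (fun y : ℝ => ∫ s in (0:ℝ)..(-y), s * φ s) := by
      filter_upwards [Iio_mem_nhds hx] with y hy
      unfold Phi
      rw [abs_of_neg hy]
    have h3 := h1.congr_of_eventuallyEq h2
    refine h3.congr_deriv ?_
    rw [Phid, if_neg hx.ne, abs_of_neg hx]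
  · -- x = 0
    subst hx
    rw [Phid, if_pos rfl]
    rw [hasDerivAt_iff_tendsto_slope]
    have key : ∀ y : ℝ, y ≠ 0 → |y| ≤ δ₀ → ‖slope (Phi φ) 0 y‖ ≤ (c₂ / r) * |y| ^ (r - 1) := by
      intro y hy hyδ
      have hay : 0 < |y| := abs_pos.2 hy
      have h1 : Phi φ y ≤ c₂ * |y| ^ r / r := by
        rw [← Phi_abs]; exact Phi_rpow_bound H hay.le hyδ
      have h2 : 0 ≤ Phi φ y := Phi_nonneg H y
      rw [slope_def_field, Phi_zero, sub_zero, sub_zero, Real.norm_eq_abs, abs_div,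
        abs_of_nonneg h2]
      rw [div_le_iff₀ hay]
      have h3 : (c₂ / r) * |y| ^ (r - 1) * |y| = c₂ * |y| ^ r / r := by
        rw [mul_assoc, ← Real.rpow_add_one hay.ne' (r-1), sub_add_cancel]
        ring
      rw [h3]
      exact h1
    have hr1 : (0:ℝ) ≤ r - 1 := by linarith [H.hr]
    have htend : Tendsto (fun y : ℝ => (c₂ / r) * |y| ^ (r - 1)) (nhdsWithin 0 {(0:ℝ)}ᶜ) (nhds 0) := by
      have l1 : ContinuousAt (fun z : ℝ => z ^ (r - 1)) 0 :=
        Real.continuousAt_rpow_const 0 (r - 1) (Or.inr hr1)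
      have l2 : Tendsto (fun y : ℝ => |y| ^ (r - 1)) (nhds 0) (nhds 0) := by
        have : Tendsto (fun y : ℝ => |y|) (nhds 0) (nhds 0) := by
          simpa using continuous_abs.tendsto (0:ℝ)
        have := l1.tendsto.comp this
        simpa [Function.comp_def, Real.zero_rpow (by linarith [H.hr] : r - 1 ≠ 0)] using this
      have l3 := (l2.const_mul (c₂ / r)).mono_left
        (nhdsWithin_le_nhds (s := {(0:ℝ)}ᶜ))
      simpa using l3
    apply squeeze_zero_norm' _ htend
    have hmem : {y : ℝ | |y| ≤ δ₀} ∈ nhdsWithin (0:ℝ) {(0:ℝ)}ᶜ := by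
      apply nhdsWithin_le_nhds
      have : {y : ℝ | |y| ≤ δ₀} ∈ nhds (0:ℝ) := by
        have := Metric.closedBall_mem_nhds (0:ℝ) H.hδ₀
        simpa [Metric.closedBall, Real.dist_eq] using this
      exact this
    filter_upwards [hmem, self_mem_nhdsWithin] with y h1' h2'
    exact key y h2' h1'
  · -- x > 0
    have h2 : Phi φ =ᶠ[nhds x] (fun u : ℝ => ∫ s in (0:ℝ)..u, s * φ s) := by
      filter_upwards [Ioi_mem_nhds hx] with y hy
      unfold Phi
      rw [abs_of_pos hy]
    have h3 := (hG x hx).congr_of_eventuallyEq h2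
    refine h3.congr_deriv ?_
    rw [Phid, if_neg hx.ne', abs_of_pos hx]

end PhiDeriv
section Hfun

variable {φ : ℝ → ℝ} {c₂ δ₀ r l m : ℝ}

noncomputable def hfun (φ : ℝ → ℝ) (s : ℝ) : ℝ :=
  (if s = 0 then 0 else s ^ 2 * φ |s|) - Phi φ s

lemma hfun_abs (s : ℝ) : hfun φ |s| = hfun φ s := by
  unfold hfun
  rw [Phi_abs, abs_abs, sq_abs]
  by_cases h : s = 0
  · simp [h]
  · rw [if_neg h, if_neg (abs_ne_zero.2 h)]

lemma hfun_zero : hfun φ 0 = 0 := by simp [hfun, Phi_zero]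

lemma Phi_continuous (H : PhiHyp φ c₂ δ₀ r) : Continuous (Phi φ) :=
  continuous_iff_continuousAt.2 fun x => (Phi_hasDerivAt H x).continuousAt

lemma sqphi_contOn (H : PhiHyp φ c₂ δ₀ r) :
    ContinuousOn (fun s : ℝ => if s = 0 then 0 else s ^ 2 * φ |s|) (Ici 0) := by
  intro x hx
  rcases eq_or_lt_of_le (mem_Ici.1 hx) with h | h
  · -- x = 0
    subst h
    rw [ContinuousWithinAt]
    have hev : ∀ s ∈ Ici (0:ℝ), s ≤ δ₀ →
        ‖if s = 0 then 0 else s ^ 2 * φ |s|‖ ≤ (c₂ * δ₀ ^ (r - 1)) * s := by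
      intro s hs hsδ
      rcases eq_or_lt_of_le (mem_Ici.1 hs) with h' | h'
      · simp [← h']
      · rw [if_neg h'.ne', abs_of_pos h']
        have h1 : ‖s * φ s‖ ≤ c₂ * δ₀ ^ (r - 1) := psi_bound H h' hsδ
        have h2 : 0 < s * φ s := mul_pos h' (H.pos s h')
        rw [Real.norm_eq_abs, abs_of_pos h2] at h1
        rw [Real.norm_eq_abs, abs_of_pos (by nlinarith [H.pos s h'] : (0:ℝ) < s ^ 2 * φ s)]
        nlinarith
    have : Tendsto (fun s : ℝ => if s = 0 then 0 else s ^ 2 * φ |s|)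
        (nhdsWithin 0 (Ici 0)) (nhds 0) := by
      have hb : ∀ᶠ s in nhdsWithin (0:ℝ) (Ici 0),
          ‖if s = 0 then 0 else s ^ 2 * φ |s|‖ ≤ (c₂ * δ₀ ^ (r - 1)) * s := by
        filter_upwards [self_mem_nhdsWithin,
          nhdsWithin_le_nhds (Metric.closedBall_mem_nhds (0:ℝ) H.hδ₀)] with s h1 h2
        apply hev s h1
        have h3 := mem_closedBall_iff_norm.1 h2
        rw [sub_zero, Real.norm_eq_abs] at h3
        exact (le_abs_self s).trans h3
      have ht : Tendsto (fun s : ℝ => (c₂ * δ₀ ^ (r - 1)) * s)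
          (nhdsWithin 0 (Ici 0)) (nhds 0) := by
        have : Tendsto (fun s : ℝ => (c₂ * δ₀ ^ (r - 1)) * s) (nhds 0) (nhds 0) := by
          simpa [Pi.mul_def] using (continuous_const.mul continuous_id).tendsto (0:ℝ)
        exact this.mono_left nhdsWithin_le_nhds
      exact squeeze_zero_norm' hb ht
    simpa using this
  · -- x > 0
    have hev : (fun s : ℝ => s ^ 2 * φ s) =ᶠ[nhds x]
        (fun s : ℝ => if s = 0 then 0 else s ^ 2 * φ |s|) := by
      filter_upwards [Ioi_mem_nhds h] with s hs
      rw [if_neg (ne_of_gt hs), abs_of_pos hs]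
    have c1 : ContinuousAt (fun s : ℝ => s ^ 2 * φ s) x :=
      (continuous_pow 2).continuousAt.mul (H.cont.continuousAt (Ioi_mem_nhds h))
    exact (c1.congr hev).continuousWithinAt
  
end Hfun
section HfunDeriv

variable {φ : ℝ → ℝ} {c₂ δ₀ r l m : ℝ}

lemma hfun_hasDerivAt (H : PhiHyp φ c₂ δ₀ r)
    (hder : ∀ t > (0:ℝ), DifferentiableAt ℝ φ t) {s : ℝ} (hs : 0 < s) :
    HasDerivAt (hfun φ) (s * deriv (fun x => φ x * x) s) s := by
  have hΨ : HasDerivAt (fun x => φ x * x) (deriv (fun x => φ x * x) s) s :=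
    ((hder s hs).mul differentiableAt_id).hasDerivAt
  have h1 : HasDerivAt (fun x : ℝ => x * (φ x * x))
      (1 * (φ s * s) + s * deriv (fun x => φ x * x) s) s := (hasDerivAt_id s).mul hΨ
  have h2 := Phi_hasDerivAt H s
  have h3 := h1.sub h2
  have hev : (fun x : ℝ => x * (φ x * x) - Phi φ x) =ᶠ[nhds s] hfun φ := by
    filter_upwards [Ioi_mem_nhds hs] with x hx
    unfold hfun
    rw [if_neg (ne_of_gt hx), abs_of_pos hx]
    ring_nf
  have h4 := h3.congr_of_eventuallyEq hev.symm
  refine h4.congr_deriv ?_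
  rw [Phid, if_neg hs.ne', abs_of_pos hs]
  ring

lemma hfun_contOn (H : PhiHyp φ c₂ δ₀ r) : ContinuousOn (hfun φ) (Ici 0) :=
  (sqphi_contOn H).sub (Phi_continuous H).continuousOn

lemma hfun_bounds (H : PhiHyp φ c₂ δ₀ r)
    (hder : ∀ t > (0:ℝ), DifferentiableAt ℝ φ t)
    (hφ2 : ∀ t > (0:ℝ), l - 1 ≤ deriv (fun s => φ s * s) t / φ t ∧
      deriv (fun s => φ s * s) t / φ t ≤ m - 1)
    {s : ℝ} (hs : 0 ≤ s) :
    (l - 1) * Phi φ s ≤ hfun φ s ∧ hfun φ s ≤ (m - 1) * Phi φ s := by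
  have hD : ∀ x > (0:ℝ), (l - 1) * φ x ≤ deriv (fun s => φ s * s) x ∧
      deriv (fun s => φ s * s) x ≤ (m - 1) * φ x := by
    intro x hx
    have hp := H.pos x hx
    constructor
    · have := (hφ2 x hx).1
      rw [le_div_iff₀ hp] at this
      linarith
    · have := (hφ2 x hx).2
      rw [div_le_iff₀ hp] at this
      linarith
  constructor
  · -- lower bound
    set g : ℝ → ℝ := fun s => hfun φ s - (l - 1) * Phi φ s with hg
    have hder' : ∀ x ∈ Ioi (0:ℝ), HasDerivAt g
        (x * deriv (fun u => φ u * u) x - (l - 1) * Phid φ x) x := fun x hx =>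
      (hfun_hasDerivAt H hder hx).sub ((Phi_hasDerivAt H x).const_mul (l - 1))
    have hmono : MonotoneOn g (Ici 0) := by
      apply monotoneOn_of_deriv_nonneg (convex_Ici 0)
      · exact (hfun_contOn H).sub ((Phi_continuous H).continuousOn.const_smul (l-1) |>.congr
          (fun x _ => by simp [smul_eq_mul]))
      · rw [interior_Ici]
        exact fun x hx => (hder' x hx).differentiableAt.differentiableWithinAt
      · rw [interior_Ici]
        intro x hx
        rw [(hder' x hx).deriv]
        rw [Phid, if_neg (ne_of_gt hx), abs_of_pos hx]
        have h1 := (hD x hx).1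
        have hp := H.pos x hx
        nlinarith [mem_Ioi.1 hx]
    have h0 : g 0 = 0 := by simp [hg, hfun_zero, Phi_zero]
    have := hmono (self_mem_Ici) (mem_Ici.2 hs) hs
    rw [h0] at this
    simpa [hg] using this
  · -- upper bound
    set g : ℝ → ℝ := fun s => (m - 1) * Phi φ s - hfun φ s with hg
    have hder' : ∀ x ∈ Ioi (0:ℝ), HasDerivAt g
        ((m - 1) * Phid φ x - x * deriv (fun u => φ u * u) x) x := fun x hx =>
      ((Phi_hasDerivAt H x).const_mul (m - 1)).sub (hfun_hasDerivAt H hder hx)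
    have hmono : MonotoneOn g (Ici 0) := by
      apply monotoneOn_of_deriv_nonneg (convex_Ici 0)
      · exact (((Phi_continuous H).continuousOn.const_smul (m-1)).congr
          (fun x _ => by simp [smul_eq_mul])).sub (hfun_contOn H)
      · rw [interior_Ici]
        exact fun x hx => (hder' x hx).differentiableAt.differentiableWithinAt
      · rw [interior_Ici]
        intro x hx
        rw [(hder' x hx).deriv]
        rw [Phid, if_neg (ne_of_gt hx), abs_of_pos hx]
        have h1 := (hD x hx).2
        have hp := H.pos x hx
        nlinarith [mem_Ioi.1 hx]
    have h0 : g 0 = 0 := by simp [hg, hfun_zero, Phi_zero]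
    have := hmono (self_mem_Ici) (mem_Ici.2 hs) hs
    rw [h0] at this
    simpa [hg] using this

lemma Phi_scale (H : PhiHyp φ c₂ δ₀ r)
    (hder : ∀ t > (0:ℝ), DifferentiableAt ℝ φ t)
    (hφ1 : ∀ t > (0:ℝ), 0 < deriv (fun s => φ s * s) t)
    {lam s : ℝ} (h0 : 0 ≤ lam) (h1 : lam ≤ 1) (hs : 0 ≤ s) :
    Phi φ (lam * s) ≤ lam * Phi φ s := by
  have hΨmono : StrictMonoOn (fun x => φ x * x) (Ioi 0) := by
    apply strictMonoOn_of_deriv_pos (convex_Ioi 0)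
    · exact H.cont.mul continuousOn_id
    · rw [interior_Ioi]
      exact hφ1
  have hderiv_mono : MonotoneOn (deriv (Phi φ)) (interior (Ici (0:ℝ))) := by
    rw [interior_Ici]
    intro a ha b hb hab
    rw [(Phi_hasDerivAt H a).deriv, (Phi_hasDerivAt H b).deriv]
    rw [Phid, Phid, if_neg (ne_of_gt (mem_Ioi.1 ha)), if_neg (ne_of_gt (mem_Ioi.1 hb)),
      abs_of_pos (mem_Ioi.1 ha), abs_of_pos (mem_Ioi.1 hb)]
    rcases eq_or_lt_of_le hab with h | h
    · rw [h]
    · have := hΨmono ha hb h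
      simp only [mul_comm] at this ⊢
      exact this.le
  have hconv : ConvexOn ℝ (Ici 0) (Phi φ) := by
    apply MonotoneOn.convexOn_of_deriv (convex_Ici 0) (Phi_continuous H).continuousOn
    · rw [interior_Ici]
      exact fun x hx => (Phi_hasDerivAt H x).differentiableAt.differentiableWithinAt
    · exact hderiv_mono
  have key : Phi φ (lam • s + (1 - lam) • (0:ℝ)) ≤
      lam • Phi φ s + (1 - lam) • Phi φ 0 :=
    hconv.2 (mem_Ici.2 hs) self_mem_Ici h0 (by linarith) (by ring)
  simpa [Phi_zero, smul_eq_mul] using key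

end HfunDeriv
section Energy

variable {φ : ℝ → ℝ} {c₂ δ₀ r l m α : ℝ} {q : ℝ → ℝ}

lemma V_hasDerivAt (H : PhiHyp φ c₂ δ₀ r) (α x : ℝ) :
    HasDerivAt (fun t => Phi φ |t ^ 2 - α ^ 2|) (Phid φ (x ^ 2 - α ^ 2) * (2 * x)) x := by
  have h0 : (fun t : ℝ => Phi φ |t ^ 2 - α ^ 2|) = fun t => Phi φ (t ^ 2 - α ^ 2) := by
    funext t; rw [Phi_abs]
  rw [h0]
  have h1 : HasDerivAt (fun t : ℝ => t ^ 2 - α ^ 2) (2 * x) x := by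
    have := (hasDerivAt_pow 2 x).sub_const (α ^ 2)
    simpa using this
  exact (Phi_hasDerivAt H (x ^ 2 - α ^ 2)).comp x h1

lemma V_deriv_eq (H : PhiHyp φ c₂ δ₀ r) (α x : ℝ) :
    deriv (fun t => Phi φ |t ^ 2 - α ^ 2|) x = Phid φ (x ^ 2 - α ^ 2) * (2 * x) :=
  (V_hasDerivAt H α x).deriv

lemma energy_hasDerivAt (H : PhiHyp φ c₂ δ₀ r)
    (hdiff : Differentiable ℝ q)
    (hsol : ∀ t : ℝ, HasDerivAt
      (fun s => if deriv q s = 0 then 0 else φ |deriv q s| * deriv q s)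
      (deriv (fun t => Phi φ |t ^ 2 - α ^ 2|) (q t)) t)
    (hq'' : Differentiable ℝ (deriv q)) (t : ℝ) :
    HasDerivAt (fun t => deriv q t *
        (if deriv q t = 0 then 0 else φ |deriv q t| * deriv q t)
      - Phi φ (deriv q t) - Phi φ (q t ^ 2 - α ^ 2)) 0 t := by
  set W : ℝ → ℝ := fun s => if deriv q s = 0 then 0 else φ |deriv q s| * deriv q s with hWdef
  have hW : HasDerivAt W (Phid φ (q t ^ 2 - α ^ 2) * (2 * q t)) t := by
    have := hsol t
    rwa [V_deriv_eq H α (q t)] at this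
  have hq'd : HasDerivAt (deriv q) (deriv (deriv q) t) t := (hq'' t).hasDerivAt
  have hA : HasDerivAt (fun t => deriv q t * W t)
      (deriv (deriv q) t * W t + deriv q t * (Phid φ (q t ^ 2 - α ^ 2) * (2 * q t))) t :=
    hq'd.mul hW
  have hB : HasDerivAt (fun t => Phi φ (deriv q t))
      (Phid φ (deriv q t) * deriv (deriv q) t) t :=
    (Phi_hasDerivAt H (deriv q t)).comp t hq'd
  have hC : HasDerivAt (fun t => Phi φ (q t ^ 2 - α ^ 2))
      ((Phid φ (q t ^ 2 - α ^ 2) * (2 * q t)) * deriv q t) t := by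
    have h0 : (fun t : ℝ => Phi φ (q t ^ 2 - α ^ 2)) =
        (fun x : ℝ => Phi φ |x ^ 2 - α ^ 2|) ∘ q := by
      funext u; simp only [Function.comp_apply, Phi_abs]
    rw [h0]
    exact (V_hasDerivAt H α (q t)).comp t (hdiff t).hasDerivAt
  have hWPhid : W t = Phid φ (deriv q t) := by
    simp only [hWdef, Phid]
    by_cases h : deriv q t = 0
    · simp [h]
    · rw [if_neg h, if_neg h, mul_comm]
  have := (hA.sub hB).sub hC
  refine this.congr_deriv ?_
  rw [hWPhid]
  ring

lemma energy_const (H : PhiHyp φ c₂ δ₀ r)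
    (hdiff : Differentiable ℝ q)
    (hsol : ∀ t : ℝ, HasDerivAt
      (fun s => if deriv q s = 0 then 0 else φ |deriv q s| * deriv q s)
      (deriv (fun t => Phi φ |t ^ 2 - α ^ 2|) (q t)) t)
    (hq'' : Differentiable ℝ (deriv q)) (s t : ℝ) :
    hfun φ (deriv q s) - Phi φ (q s ^ 2 - α ^ 2)
      = hfun φ (deriv q t) - Phi φ (q t ^ 2 - α ^ 2) := by
  set E : ℝ → ℝ := fun t => deriv q t *
      (if deriv q t = 0 then 0 else φ |deriv q t| * deriv q t)
    - Phi φ (deriv q t) - Phi φ (q t ^ 2 - α ^ 2) with hE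
  have hEd : ∀ u : ℝ, HasDerivAt E 0 u := energy_hasDerivAt H hdiff hsol hq''
  have hconst : E s = E t :=
    is_const_of_deriv_eq_zero (fun u => (hEd u).differentiableAt)
      (fun u => (hEd u).deriv) s t
  have hEeq : ∀ u : ℝ, E u = hfun φ (deriv q u) - Phi φ (q u ^ 2 - α ^ 2) := by
    intro u
    rw [hE]
    simp only [hfun]
    by_cases h : deriv q u = 0
    · simp [h]
    · rw [if_neg h, if_neg h]
      ring
  rw [← hEeq s, ← hEeq t]
  exact hconst

end Energy
section EnergyZero

variable {φ : ℝ → ℝ} {c₂ δ₀ r l m α : ℝ} {q : ℝ → ℝ}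

lemma hfun_nonneg (H : PhiHyp φ c₂ δ₀ r)
    (hder : ∀ t > (0:ℝ), DifferentiableAt ℝ φ t)
    (hφ2 : ∀ t > (0:ℝ), l - 1 ≤ deriv (fun s => φ s * s) t / φ t ∧
      deriv (fun s => φ s * s) t / φ t ≤ m - 1)
    (hl : 1 < l) (s : ℝ) : 0 ≤ hfun φ s := by
  rw [← hfun_abs]
  have h1 := (hfun_bounds H hder hφ2 (abs_nonneg s)).1
  have h2 : 0 ≤ Phi φ |s| := Phi_nonneg H _
  nlinarith

lemma energy_zero (H : PhiHyp φ c₂ δ₀ r)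
    (hder : ∀ t > (0:ℝ), DifferentiableAt ℝ φ t)
    (hφ2 : ∀ t > (0:ℝ), l - 1 ≤ deriv (fun s => φ s * s) t / φ t ∧
      deriv (fun s => φ s * s) t / φ t ≤ m - 1)
    (hl : 1 < l)
    (hdiff : Differentiable ℝ q)
    (hsol : ∀ t : ℝ, HasDerivAt
      (fun s => if deriv q s = 0 then 0 else φ |deriv q s| * deriv q s)
      (deriv (fun t => Phi φ |t ^ 2 - α ^ 2|) (q t)) t)
    (hq'' : Differentiable ℝ (deriv q))
    (hq'cont : Continuous (deriv q))
    (htop : Tendsto q atTop (nhds α)) (t : ℝ) :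
    hfun φ (deriv q t) = Phi φ (q t ^ 2 - α ^ 2) := by
  set c : ℝ := hfun φ (deriv q 0) - Phi φ (q 0 ^ 2 - α ^ 2) with hc
  have hconsv : ∀ u : ℝ, hfun φ (deriv q u) - Phi φ (q u ^ 2 - α ^ 2) = c :=
    fun u => energy_const H hdiff hsol hq'' u 0
  have hVnonneg : ∀ u : ℝ, 0 ≤ Phi φ (q u ^ 2 - α ^ 2) := fun u => Phi_nonneg H _
  suffices hc0 : c = 0 by
    have := hconsv t
    rw [hc0] at this
    linarith
  have hVtend : Tendsto (fun u => Phi φ (q u ^ 2 - α ^ 2)) atTop (nhds 0) := by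
    have h1 : Tendsto (fun u => q u ^ 2 - α ^ 2) atTop (nhds 0) := by
      have h2 : Tendsto (fun x : ℝ => x ^ 2 - α ^ 2) (nhds α) (nhds (α ^ 2 - α ^ 2)) :=
        ((continuous_pow 2).sub continuous_const).continuousAt.tendsto
      have := h2.comp htop
      simpa [Function.comp_def] using this
    have := (Phi_continuous H).continuousAt.tendsto.comp h1
    simpa [Function.comp_def, Phi_zero] using this
  have hftend : Tendsto (fun u => hfun φ (deriv q u)) atTop (nhds c) := by
    have : (fun u => hfun φ (deriv q u)) = fun u => c + Phi φ (q u ^ 2 - α ^ 2) := by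
      funext u; have := hconsv u; linarith
    rw [this]
    simpa using (tendsto_const_nhds (x := c) (f := atTop)).add hVtend
  have hcge : 0 ≤ c :=
    ge_of_tendsto hftend (Eventually.of_forall (fun u => hfun_nonneg H hder hφ2 hl _))
  rcases eq_or_lt_of_le hcge with h | hcpos
  · exact h.symm
  exfalso
  -- find δ' such that hfun < c on [0, δ')
  have hcont0 : ContinuousWithinAt (hfun φ) (Ici 0) 0 := hfun_contOn H 0 self_mem_Ici
  have h0 : Tendsto (hfun φ) (nhdsWithin 0 (Ici 0)) (nhds 0) := by
    have := hcont0.tendsto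
    rwa [hfun_zero] at this
  have hev : ∀ᶠ s in nhdsWithin (0:ℝ) (Ici 0), hfun φ s < c :=
    h0.eventually_lt_const hcpos
  rw [Filter.Eventually, Metric.mem_nhdsWithin_iff] at hev
  obtain ⟨δ', hδ'pos, hδ'sub⟩ := hev
  have hδ' : ∀ s : ℝ, 0 ≤ s → dist s 0 < δ' → hfun φ s < c := by
    intro s h1 h2
    exact hδ'sub ⟨Metric.mem_ball.2 h2, mem_Ici.2 h1⟩
  set δ : ℝ := δ' / 2 with hδdef
  have hδpos : 0 < δ := by positivity
  have habs : ∀ u : ℝ, δ < |deriv q u| := by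
    intro u
    by_contra hcon
    push_neg at hcon
    have h1 : hfun φ |deriv q u| < c := by
      apply hδ' _ (abs_nonneg _)
      rw [Real.dist_eq, sub_zero, abs_abs]
      calc |deriv q u| ≤ δ := hcon
        _ < δ' := by linarith
    rw [hfun_abs] at h1
    have h2 := hconsv u
    have h3 := hVnonneg u
    linarith
  have hsign : (∀ u : ℝ, δ < deriv q u) ∨ (∀ u : ℝ, deriv q u < -δ) := by
    by_cases hP : ∀ u : ℝ, δ < deriv q u
    · exact Or.inl hP
    push_neg at hP
    obtain ⟨a, ha⟩ := hP
    have ha' : deriv q a < -δ := by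
      have h1 := habs a
      rcases lt_or_ge (deriv q a) 0 with h' | h'
      · rw [abs_of_neg h'] at h1; linarith
      · rw [abs_of_nonneg h'] at h1; linarith
    right
    intro b
    by_contra hb
    push_neg at hb
    have hb' : δ < deriv q b := by
      have h1 := habs b
      rcases lt_or_ge (deriv q b) 0 with h' | h'
      · rw [abs_of_neg h'] at h1; linarith
      · rwa [abs_of_nonneg h'] at h1
    have hsub := intermediate_value_uIcc (a := a) (b := b) (f := deriv q)
      hq'cont.continuousOn
    have h0mem : (0:ℝ) ∈ uIcc (deriv q a) (deriv q b) := by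
      rw [Set.mem_uIcc]
      exact Or.inl ⟨by linarith, by linarith⟩
    obtain ⟨x, _, hx⟩ := hsub h0mem
    have h1 := habs x
    rw [hx] at h1
    simp at h1
    linarith
  rcases hsign with hP | hN
  · have hg : ∀ u : ℝ, HasDerivAt (fun t => q t - δ * t) (deriv q u - δ) u :=
      fun u => by
        have h5 : HasDerivAt (fun t : ℝ => δ * t) (δ * 1) u := (hasDerivAt_id u).const_mul δ
        exact (((hdiff u).hasDerivAt).sub h5).congr_deriv (by simp)
    have hmono : Monotone (fun t => q t - δ * t) := by
      apply monotone_of_deriv_nonneg (fun u => (hg u).differentiableAt)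
      intro u
      rw [(hg u).deriv]
      linarith [hP u]
    have hevq : ∀ᶠ u in atTop, q u < α + 1 := htop.eventually_lt_const (by linarith)
    obtain ⟨T, hT⟩ := eventually_atTop.1 hevq
    set t₀ : ℝ := max T (max 0 ((α + 1 - q 0) / δ + 1)) with ht₀def
    have ht₀0 : (0:ℝ) ≤ t₀ := le_max_of_le_right (le_max_left _ _)
    have h1 : q 0 - δ * 0 ≤ q t₀ - δ * t₀ := hmono ht₀0
    have h2 : (α + 1 - q 0) / δ + 1 ≤ t₀ := le_max_of_le_right (le_max_right _ _)
    have h3 : α + 1 - q 0 < δ * t₀ := by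
      have h4 : δ * ((α + 1 - q 0) / δ + 1) ≤ δ * t₀ :=
        mul_le_mul_of_nonneg_left h2 hδpos.le
      have hd : δ * ((α + 1 - q 0) / δ) = α + 1 - q 0 := mul_div_cancel₀ _ hδpos.ne'
      nlinarith
    have h4 := hT t₀ (le_max_left _ _)
    nlinarith
  · have hg : ∀ u : ℝ, HasDerivAt (fun t => q t + δ * t) (deriv q u + δ) u :=
      fun u => by
        have h5 : HasDerivAt (fun t : ℝ => δ * t) (δ * 1) u := (hasDerivAt_id u).const_mul δ
        exact (((hdiff u).hasDerivAt).add h5).congr_deriv (by simp)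
    have hanti : Antitone (fun t => q t + δ * t) := by
      apply antitone_of_deriv_nonpos (fun u => (hg u).differentiableAt)
      intro u
      rw [(hg u).deriv]
      linarith [hN u]
    have hevq : ∀ᶠ u in atTop, α - 1 < q u := htop.eventually_const_lt (by linarith)
    obtain ⟨T, hT⟩ := eventually_atTop.1 hevq
    set t₀ : ℝ := max T (max 0 ((q 0 - (α - 1)) / δ + 1)) with ht₀def
    have ht₀0 : (0:ℝ) ≤ t₀ := le_max_of_le_right (le_max_left _ _)
    have h1 : q t₀ + δ * t₀ ≤ q 0 + δ * 0 := hanti ht₀0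
    have h2 : (q 0 - (α - 1)) / δ + 1 ≤ t₀ := le_max_of_le_right (le_max_right _ _)
    have h3 : q 0 - (α - 1) < δ * t₀ := by
      have h4 : δ * ((q 0 - (α - 1)) / δ + 1) ≤ δ * t₀ :=
        mul_le_mul_of_nonneg_left h2 hδpos.le
      have hd : δ * ((q 0 - (α - 1)) / δ) = q 0 - (α - 1) := mul_div_cancel₀ _ hδpos.ne'
      nlinarith
    have h4 := hT t₀ (le_max_left _ _)
    nlinarith

end EnergyZero
section ConsIneq

variable {φ : ℝ → ℝ} {c₂ δ₀ r l m α : ℝ} {q : ℝ → ℝ}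

lemma conserv_ineq (H : PhiHyp φ c₂ δ₀ r)
    (hder : ∀ t > (0:ℝ), DifferentiableAt ℝ φ t)
    (hφ1 : ∀ t > (0:ℝ), 0 < deriv (fun s => φ s * s) t)
    (hφ2 : ∀ t > (0:ℝ), l - 1 ≤ deriv (fun s => φ s * s) t / φ t ∧
      deriv (fun s => φ s * s) t / φ t ≤ m - 1)
    (hl : 1 < l) (hlm : l ≤ m) (hcase : m - 1 < 1)
    (hCI : hfun φ (deriv q t) = Phi φ (q t ^ 2 - α ^ 2)) :
    (l - 1) * |deriv q t| ≤ |q t ^ 2 - α ^ 2| ∧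
    (deriv q t = 0 → q t ^ 2 = α ^ 2) ∧
    (deriv q t ≠ 0 → |q t ^ 2 - α ^ 2| < |deriv q t|) := by
  set s : ℝ := |deriv q t| with hs
  set y : ℝ := |q t ^ 2 - α ^ 2| with hy
  have hs0 : 0 ≤ s := abs_nonneg _
  have hy0 : 0 ≤ y := abs_nonneg _
  have hCI' : hfun φ s = Phi φ y := by
    rw [hs, hy, hfun_abs, Phi_abs]
    exact hCI
  have hb := hfun_bounds H hder hφ2 hs0
  have hlow : (l - 1) * Phi φ s ≤ Phi φ y := by rw [← hCI']; exact hb.1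
  have hup : Phi φ y ≤ (m - 1) * Phi φ s := by rw [← hCI']; exact hb.2
  refine ⟨?_, ?_, ?_⟩
  · -- (l-1) * s ≤ y
    have h1 : Phi φ ((l - 1) * s) ≤ (l - 1) * Phi φ s :=
      Phi_scale H hder hφ1 (by linarith) (by linarith) hs0
    exact Phi_le_rev H (mul_nonneg (by linarith) hs0) hy0 (h1.trans hlow)
  · -- s = 0 → q² = α²
    intro h0
    have hs' : s = 0 := by rw [hs, h0, abs_zero]
    rw [hs'] at hup
    rw [Phi_zero] at hup
    have h2 : Phi φ y ≤ 0 := by linarith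
    have h3 : y = 0 := by
      by_contra hc
      have := Phi_pos H hc
      linarith
    have := abs_eq_zero.1 (hy ▸ h3)
    linarith [sub_eq_zero.1 this]
  · -- s ≠ 0 → y < s
    intro h0
    have hspos : 0 < s := abs_pos.2 h0
    have hPs : 0 < Phi φ s := Phi_pos H hspos.ne'
    have h1 : Phi φ y < Phi φ s := by nlinarith
    by_contra hc
    push_neg at hc
    have := Phi_mono H hs0 hc
    linarith

end ConsIneq
section NeverTouch

variable {l α : ℝ} {q : ℝ → ℝ}

lemma never_touch
    (hdiff : Differentiable ℝ q) (hq'cont : Continuous (deriv q))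
    (hB : ∀ t : ℝ, (l - 1) * |deriv q t| ≤ |q t ^ 2 - α ^ 2|)
    (hl : 1 < l) (hq0 : q 0 = 0) (hα : 0 < α) :
    ∀ t : ℝ, q t ^ 2 ≠ α ^ 2 := by
  set z : ℝ → ℝ := fun t => q t ^ 2 - α ^ 2 with hzdef
  have hz : ∀ t : ℝ, HasDerivAt z (2 * q t * deriv q t) t := by
    intro t
    have h1 := ((hdiff t).hasDerivAt.pow 2).sub_const (α ^ 2)
    simpa [hzdef, mul_comm, mul_assoc] using h1
  have hzcont : Continuous z := by
    apply Continuous.sub _ continuous_const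
    exact (hdiff.continuous).pow 2
  set S : Set ℝ := {t | z t = 0} with hSdef
  have hSclosed : IsClosed S := isClosed_eq hzcont continuous_const
  have hSopen : IsOpen S := by
    rw [isOpen_iff_mem_nhds]
    intro t₁ ht₁
    have ht₁' : z t₁ = 0 := ht₁
    obtain ⟨M, hM⟩ := (isCompact_Icc (a := t₁ - 1) (b := t₁ + 1)).exists_bound_of_continuousOn
      (hdiff.continuous.continuousOn)
    have hM0 : 0 ≤ M := le_trans (norm_nonneg _) (hM t₁ (by constructor <;> linarith))
    set K : ℝ := 2 * M / (l - 1) with hKdef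
    have hbound : ∀ x : ℝ, x ∈ Icc (t₁ - 1) (t₁ + 1) →
        ‖2 * q x * deriv q x‖ ≤ K * ‖z x‖ + 0 := by
      intro x hx
      have h1 : |q x| ≤ M := by
        have := hM x hx
        rwa [Real.norm_eq_abs] at this
      have h2 : |deriv q x| ≤ |z x| / (l - 1) := by
        rw [le_div_iff₀ (by linarith : (0:ℝ) < l - 1)]
        calc |deriv q x| * (l - 1) = (l - 1) * |deriv q x| := by ring
          _ ≤ |z x| := hB x
      rw [Real.norm_eq_abs, Real.norm_eq_abs, add_zero, abs_mul, abs_mul]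
      rw [hKdef]
      rw [div_mul_eq_mul_div, le_div_iff₀ (by linarith : (0:ℝ) < l - 1)]
      have h3 : |(2:ℝ)| = 2 := by norm_num
      rw [h3]
      calc 2 * |q x| * |deriv q x| * (l - 1) = 2 * |q x| * ((l-1) * |deriv q x|) := by ring
        _ ≤ 2 * M * ((l-1) * |deriv q x|) := by
            apply mul_le_mul_of_nonneg_right _
              (mul_nonneg (by linarith) (abs_nonneg _))
            nlinarith [abs_nonneg (q x)]
        _ ≤ 2 * M * |z x| := by
            apply mul_le_mul_of_nonneg_left (hB x) (by positivity)
    -- forward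
    have hfwd : ∀ x ∈ Icc t₁ (t₁ + 1), ‖z x‖ ≤ gronwallBound 0 K 0 (x - t₁) := by
      apply norm_le_gronwallBound_of_norm_deriv_right_le
        (hzcont.continuousOn) (fun x _ => (hz x).hasDerivWithinAt)
      · rw [ht₁']; simp
      · intro x hx
        exact hbound x ⟨by linarith [hx.1], by linarith [hx.2]⟩
    -- backward
    set w : ℝ → ℝ := fun s => z (2 * t₁ - s) with hwdef
    have hw : ∀ s : ℝ, HasDerivAt w (-(2 * q (2*t₁ - s) * deriv q (2*t₁ - s))) s := by
      intro s
      have h1 : HasDerivAt (fun u : ℝ => 2 * t₁ - u) (-1) s := by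
        simpa using (hasDerivAt_id s).const_sub (2 * t₁)
      have h2 := (hz (2 * t₁ - s)).comp s h1
      have h3 : w = z ∘ (fun u : ℝ => 2 * t₁ - u) := rfl
      rw [h3]
      refine h2.congr_deriv ?_
      ring
    have hbwd : ∀ x ∈ Icc t₁ (t₁ + 1), ‖w x‖ ≤ gronwallBound 0 K 0 (x - t₁) := by
      apply norm_le_gronwallBound_of_norm_deriv_right_le
        ((hzcont.comp (continuous_const.sub continuous_id)).continuousOn)
        (fun x _ => (hw x).hasDerivWithinAt)
      · show ‖z (2 * t₁ - t₁)‖ ≤ 0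
        have : (2 * t₁ - t₁) = t₁ := by ring
        rw [this, ht₁']; simp
      · intro x hx
        rw [norm_neg]
        exact hbound (2*t₁ - x) ⟨by linarith [hx.2], by linarith [hx.1]⟩
    have hzero : ∀ x ∈ Icc (t₁ - 1) (t₁ + 1), z x = 0 := by
      intro x hx
      rcases le_or_gt t₁ x with h | h
      · have h8 := hfwd x ⟨h, hx.2⟩
        have h7 : gronwallBound (0:ℝ) K 0 (x - t₁) = 0 := by
          rw [gronwallBound_ε0]; ring
        rw [h7] at h8
        exact norm_le_zero_iff.1 h8
      · have h5 : (2 * t₁ - x) ∈ Icc t₁ (t₁ + 1) := ⟨by linarith, by linarith [hx.1]⟩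
        have h8 := hbwd _ h5
        have h7 : gronwallBound (0:ℝ) K 0 ((2 * t₁ - x) - t₁) = 0 := by
          rw [gronwallBound_ε0]; ring
        rw [h7] at h8
        have h9 := norm_le_zero_iff.1 h8
        have h6 : (2 * t₁ - (2 * t₁ - x)) = x := by ring
        rw [hwdef] at h9
        simp only at h9
        rwa [h6] at h9
    apply mem_of_superset (Ioo_mem_nhds (by linarith) (by linarith) :
      Ioo (t₁ - 1) (t₁ + 1) ∈ nhds t₁)
    intro x hx
    exact hzero x ⟨hx.1.le, hx.2.le⟩
  intro t hc
  have htS : t ∈ S := by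
    show z t = 0
    rw [hzdef]
    simp only
    rw [hc]; ring
  have : S = univ := by
    rcases (isClopen_iff.1 ⟨hSclosed, hSopen⟩) with h | h
    · rw [h] at htS; exact absurd htS (notMem_empty t)
    · exact h
  have h0S : (0:ℝ) ∈ S := this ▸ mem_univ 0
  have : z 0 = 0 := h0S
  rw [hzdef] at this
  simp only at this
  rw [hq0] at this
  nlinarith

end NeverTouch
section Sign

variable {l m α : ℝ} {q : ℝ → ℝ}

lemma qprime_pos
    (hdiff : Differentiable ℝ q) (hq'cont : Continuous (deriv q))
    (hnt : ∀ t : ℝ, q t ^ 2 ≠ α ^ 2)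
    (hA0 : ∀ t : ℝ, deriv q t = 0 → q t ^ 2 = α ^ 2)
    (htop : Tendsto q atTop (nhds α)) (hq0 : q 0 = 0) (hα : 0 < α) :
    ∀ t : ℝ, 0 < deriv q t := by
  have hne : ∀ t : ℝ, deriv q t ≠ 0 := fun t h => hnt t (hA0 t h)
  by_cases hP : ∀ t : ℝ, 0 < deriv q t
  · exact hP
  push_neg at hP
  obtain ⟨a, ha⟩ := hP
  have ha' : deriv q a < 0 := lt_of_le_of_ne ha (hne a)
  exfalso
  have hneg : ∀ t : ℝ, deriv q t < 0 := by
    intro b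
    by_contra hb
    push_neg at hb
    have hb' : 0 < deriv q b := lt_of_le_of_ne hb (Ne.symm (hne b))
    have hsub := intermediate_value_uIcc (a := a) (b := b) (f := deriv q)
      hq'cont.continuousOn
    have h0mem : (0:ℝ) ∈ uIcc (deriv q a) (deriv q b) := by
      rw [Set.mem_uIcc]
      exact Or.inl ⟨ha'.le, hb'.le⟩
    obtain ⟨x, _, hx⟩ := hsub h0mem
    exact hne x hx
  have hanti : Antitone q :=
    antitone_of_deriv_nonpos hdiff (fun u => (hneg u).le)
  have h4 : α ≤ q 0 := hanti.le_of_tendsto htop 0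
  rw [hq0] at h4
  linarith

lemma q_bounds
    (hdiff : Differentiable ℝ q)
    (hpos : ∀ t : ℝ, 0 < deriv q t)
    (htop : Tendsto q atTop (nhds α)) (hq0 : q 0 = 0) :
    ∀ t : ℝ, q t < α ∧ (0 ≤ t → 0 ≤ q t) := by
  have hmono : StrictMono q := strictMono_of_deriv_pos hpos
  intro t
  constructor
  · have h1 : q t < q (t + 1) := hmono (by linarith)
    have h2 : q (t + 1) ≤ α := hmono.monotone.ge_of_tendsto htop (t + 1)
    linarith
  · intro ht
    have := hmono.monotone ht
    rwa [hq0] at this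

end Sign
section Tanh

lemma tanh_hasDerivAt (x : ℝ) :
    HasDerivAt Real.tanh (1 - Real.tanh x ^ 2) x := by
  have hc : Real.cosh x ≠ 0 := (Real.cosh_pos x).ne'
  have h1 : HasDerivAt (fun y => Real.sinh y / Real.cosh y)
      ((Real.cosh x * Real.cosh x - Real.sinh x * Real.sinh x) / Real.cosh x ^ 2) x :=
    (Real.hasDerivAt_sinh x).div (Real.hasDerivAt_cosh x) hc
  have h2 : Real.tanh = fun y => Real.sinh y / Real.cosh y := by
    funext y; exact Real.tanh_eq_sinh_div_cosh y
  rw [h2]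
  convert h1 using 1
  simp only
  field_simp

/-- Gronwall comparison: if `w 0 = 0` and `w' + a w ≥ 0` on `[0, ∞)`
with `a` continuous, then `w ≥ 0` on `[0, ∞)`. -/
lemma gronwall_nonneg {w dw a : ℝ → ℝ}
    (hw : ∀ t : ℝ, HasDerivAt w (dw t) t) (ha : Continuous a)
    (hw0 : w 0 = 0) (hineq : ∀ t : ℝ, 0 ≤ t → 0 ≤ dw t + a t * w t) :
    ∀ t : ℝ, 0 ≤ t → 0 ≤ w t := by
  set R : ℝ → ℝ := fun t => ∫ s in (0:ℝ)..t, a s with hR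
  have hRd : ∀ t : ℝ, HasDerivAt R (a t) t := by
    intro t
    apply intervalIntegral.integral_hasDerivAt_right
      (ha.intervalIntegrable 0 t)
      ⟨univ, univ_mem, ha.stronglyMeasurable.aestronglyMeasurable⟩
      ha.continuousAt
  set g : ℝ → ℝ := fun t => w t * Real.exp (R t) with hg
  have hgd : ∀ t : ℝ, HasDerivAt g ((dw t + a t * w t) * Real.exp (R t)) t := by
    intro t
    have h1 : HasDerivAt (fun t => Real.exp (R t)) (Real.exp (R t) * a t) t :=
      (Real.hasDerivAt_exp (R t)).comp t (hRd t)
    have h2 := (hw t).mul h1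
    refine h2.congr_deriv ?_
    ring
  have hmono : MonotoneOn g (Ici 0) := by
    apply monotoneOn_of_deriv_nonneg (convex_Ici 0)
      (fun t _ => ((hgd t).continuousAt).continuousWithinAt)
      (fun t ht => ((hgd t).differentiableAt).differentiableWithinAt)
    intro t ht
    rw [interior_Ici] at ht
    rw [(hgd t).deriv]
    exact mul_nonneg (hineq t (le_of_lt ht)) (Real.exp_pos _).le
  intro t ht
  have h1 : g 0 ≤ g t := hmono self_mem_Ici (mem_Ici.2 ht) ht
  have h2 : g 0 = 0 := by simp [hg, hw0]
  rw [h2] at h1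
  have h3 : 0 < Real.exp (R t) := Real.exp_pos _
  have h4 : g t = w t * Real.exp (R t) := rfl
  nlinarith [h1, h3]

end Tanh
def IsClassicalSolution (φ V q : ℝ → ℝ) : Prop :=
  Differentiable ℝ q ∧
  ∀ t : ℝ, HasDerivAt
    (fun s => if deriv q s = 0 then 0 else φ |deriv q s| * deriv q s)
    (deriv V (q t)) t

def IsHeteroclinic (φ V : ℝ → ℝ) (α : ℝ) (q : ℝ → ℝ) : Prop :=
  IsClassicalSolution φ V q ∧ Differentiable ℝ (deriv q) ∧ Continuous (deriv q) ∧
  q 0 = 0 ∧ Tendsto q atTop (nhds α) ∧ Tendsto q atBot (nhds (-α))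

theorem statement6 (φ : ℝ → ℝ) (l m α : ℝ) (q : ℝ → ℝ)
    (hφC1 : ContDiffOn ℝ 1 φ (Set.Ioi 0))
    (hφpos : ∀ t > 0, 0 < φ t)
    (hφ1 : ∀ t > 0, 0 < deriv (fun s => φ s * s) t)
    (hl : 1 < l) (hlm : l ≤ m)
    (hφ2 : ∀ t > 0, l - 1 ≤ deriv (fun s => φ s * s) t / φ t ∧
      deriv (fun s => φ s * s) t / φ t ≤ m - 1)
    (hφ3 : ∃ c₁ c₂ δ₀ r : ℝ, 0 < c₁ ∧ 0 < c₂ ∧ 0 < δ₀ ∧ 1 < r ∧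
      ∀ t : ℝ, 0 < t → t ≤ δ₀ → c₁ * t ^ (r - 1) ≤ φ t * t ∧ φ t * t ≤ c₂ * t ^ (r - 1))
    (hα : 0 < α)
    (hq : IsHeteroclinic φ (fun t => Phi φ |t ^ 2 - α ^ 2|) α q)
    (hcase : m - 1 < 1) :
    ∀ t : ℝ, 0 ≤ t →
      α * Real.tanh (α * t) ≤ q t ∧ q t ≤ α * Real.tanh (α * t / (l - 1)) := by
  obtain ⟨⟨hdiff, hsol⟩, hq'', hq'cont, hq0, htop, hbot⟩ := hq
  obtain ⟨c₁, c₂, δ₀, r, hc₁, hc₂, hδ₀, hr, hφ3b⟩ := hφ3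
  have H : PhiHyp φ c₂ δ₀ r :=
    ⟨hφC1.continuousOn, hφpos, hc₂, hδ₀, hr, fun t h1 h2 => (hφ3b t h1 h2).2⟩
  have hder : ∀ t > (0:ℝ), DifferentiableAt ℝ φ t := fun t ht =>
    (hφC1.contDiffAt ((isOpen_Ioi).mem_nhds ht)).differentiableAt one_ne_zero
  have hCI : ∀ t : ℝ, hfun φ (deriv q t) = Phi φ (q t ^ 2 - α ^ 2) :=
    energy_zero H hder hφ2 hl hdiff hsol hq'' hq'cont htop
  have hineq := fun t : ℝ =>
    conserv_ineq H hder hφ1 hφ2 hl hlm hcase (hCI t)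
  have hB : ∀ t : ℝ, (l - 1) * |deriv q t| ≤ |q t ^ 2 - α ^ 2| := fun t => (hineq t).1
  have hnt : ∀ t : ℝ, q t ^ 2 ≠ α ^ 2 := never_touch hdiff hq'cont hB hl hq0 hα
  have hpos : ∀ t : ℝ, 0 < deriv q t :=
    qprime_pos hdiff hq'cont hnt (fun t => (hineq t).2.1) htop hq0 hα
  have hqb := q_bounds hdiff hpos htop hq0
  have habs : ∀ t : ℝ, 0 ≤ t → |q t ^ 2 - α ^ 2| = α ^ 2 - q t ^ 2 := by
    intro t ht
    have h1 : q t < α := (hqb t).1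
    have h2 : 0 ≤ q t := (hqb t).2 ht
    rw [abs_of_nonpos (by nlinarith)]
    ring
  have hA' : ∀ t : ℝ, 0 ≤ t → α ^ 2 - q t ^ 2 ≤ deriv q t := by
    intro t ht
    have h1 := (hineq t).2.2 (hpos t).ne'
    rw [habs t ht, abs_of_pos (hpos t)] at h1
    linarith
  have hB' : ∀ t : ℝ, 0 ≤ t → (l - 1) * deriv q t ≤ α ^ 2 - q t ^ 2 := by
    intro t ht
    have h1 := hB t
    rwa [habs t ht, abs_of_pos (hpos t)] at h1
  -- tanh comparison functions
  set u : ℝ → ℝ := fun t => α * Real.tanh (α * t) with hudef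
  have hu : ∀ t : ℝ, HasDerivAt u (α ^ 2 - u t ^ 2) t := by
    intro t
    have hinner : HasDerivAt (fun t : ℝ => α * t) (α * 1) t := (hasDerivAt_id t).const_mul α
    have h1 := ((tanh_hasDerivAt (α * t)).comp t hinner).const_mul α
    refine h1.congr_deriv ?_
    simp only [hudef]
    ring
  have hucont : Continuous u := continuous_iff_continuousAt.2 fun t => (hu t).continuousAt
  have hu0 : u 0 = 0 := by simp [hudef, Real.tanh_zero]
  set v : ℝ → ℝ := fun t => α * Real.tanh (α * t / (l - 1)) with hvdef
  have hl1 : (l:ℝ) - 1 ≠ 0 := by linarith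
  have hv : ∀ t : ℝ, HasDerivAt v ((α ^ 2 - v t ^ 2) / (l - 1)) t := by
    intro t
    have hinner : HasDerivAt (fun t : ℝ => α * t / (l - 1)) (α * 1 / (l - 1)) t :=
      ((hasDerivAt_id t).const_mul α).div_const (l - 1)
    have h1 := ((tanh_hasDerivAt (α * t / (l - 1))).comp t hinner).const_mul α
    refine h1.congr_deriv ?_
    simp only [hvdef]
    field_simp
  have hvcont : Continuous v := continuous_iff_continuousAt.2 fun t => (hv t).continuousAt
  have hv0 : v 0 = 0 := by simp [hvdef, Real.tanh_zero]
  intro t ht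
  constructor
  · -- lower bound
    have key := gronwall_nonneg (w := fun t => q t - u t)
      (dw := fun t => deriv q t - (α ^ 2 - u t ^ 2))
      (a := fun t => q t + u t)
      (fun s => ((hdiff s).hasDerivAt).sub (hu s))
      (hdiff.continuous.add hucont)
      (by show q 0 - u 0 = 0; rw [hq0, hu0]; ring)
      (by
        intro s hs
        have h1 := hA' s hs
        show 0 ≤ (deriv q s - (α ^ 2 - u s ^ 2)) + (q s + u s) * (q s - u s)
        nlinarith [h1])
      t ht
    have key' : 0 ≤ q t - u t := key
    have hut : u t = α * Real.tanh (α * t) := rfl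
    linarith
  · -- upper bound
    have key := gronwall_nonneg (w := fun t => v t - q t)
      (dw := fun t => (α ^ 2 - v t ^ 2) / (l - 1) - deriv q t)
      (a := fun t => (q t + v t) / (l - 1))
      (fun s => (hv s).sub ((hdiff s).hasDerivAt))
      ((hdiff.continuous.add hvcont).div_const (l - 1))
      (by show v 0 - q 0 = 0; rw [hq0, hv0]; ring)
      (by
        intro s hs
        have h1 := hB' s hs
        have hlpos : (0:ℝ) < l - 1 := by linarith
        have h2 : (α ^ 2 - v s ^ 2) / (l - 1) - deriv q s
            + ((q s + v s) / (l - 1)) * (v s - q s)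
            = ((α ^ 2 - q s ^ 2) - (l - 1) * deriv q s) / (l - 1) := by
          field_simp
          ring
        show 0 ≤ (α ^ 2 - v s ^ 2) / (l - 1) - deriv q s
            + ((q s + v s) / (l - 1)) * (v s - q s)
        rw [h2]
        exact div_nonneg (by linarith) hlpos.le)
      t ht
    have key' : 0 ≤ v t - q t := key
    have hvt : v t = α * Real.tanh (α * t / (l - 1)) := rfl
    linarith
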